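/- For every κ > 0 and p ≥ 2, A_p'(κ) > 0; that is, the Bessel function ratio A_p(κ) = I_{p/2}(κ)/I_{p/2-1}(κ) is strictly increasing on (0, ∞). -/

import Mathlib

open Real

/-- Modified Bessel function of the first kind, `I_v(κ)`. -/
noncomputable def besselI (v κ : ℝ) : ℝ :=
  ∑' q : ℕ, (1 / (q.factorial * Real.Gamma (q + v + 1))) * (κ / 2) ^ ((2 * q : ℝ) + v)

/-- The Bessel ratio `A_p(κ) = I_{p/2}(κ) / I_{p/2-1}(κ)`. -/
noncomputable def Ap (p : ℕ) (κ : ℝ) : ℝ :=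
  besselI (p / 2 : ℝ) κ / besselI ((p / 2 : ℝ) - 1) κ

namespace BsAux

/-- `bc v i = 1/(i! Γ(i+v+1))`, coefficient of the Bessel-type power series. -/
noncomputable def bc (v : ℝ) (i : ℕ) : ℝ := 1 / (i.factorial * Real.Gamma (i + v + 1))

lemma bc_pos {v : ℝ} (hv : 0 ≤ v) (i : ℕ) : 0 < bc v i := by
  have h : (0:ℝ) < (i:ℝ) + v + 1 := by positivity
  have hg := Real.Gamma_pos_of_pos h
  have hf : (0:ℝ) < (i.factorial : ℝ) := by exact_mod_cast i.factorial_pos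
  unfold bc; positivity

lemma bc_succ {v : ℝ} (hv : 0 ≤ v) (i : ℕ) : ((i:ℝ)+1) * bc v (i+1) = bc (v+1) i := by
  have h : (0:ℝ) < (i:ℝ) + v + 1 := by positivity
  have hg := Real.Gamma_pos_of_pos h
  have hf : (0:ℝ) < (i.factorial : ℝ) := by exact_mod_cast i.factorial_pos
  unfold bc
  rw [Nat.factorial_succ]
  push_cast
  rw [show (i:ℝ) + 1 + v + 1 = ((i:ℝ) + v + 1) + 1 by ring,
    show (i:ℝ) + (v + 1) + 1 = ((i:ℝ) + v + 1) + 1 by ring]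
  field_simp

lemma bc_down {v : ℝ} (hv : 0 < v) (i : ℕ) : bc (v-1) i = ((i:ℝ)+v) * bc v i := by
  have h : (0:ℝ) < (i:ℝ) + v := by positivity
  have hg := Real.Gamma_pos_of_pos h
  have hf : (0:ℝ) < (i.factorial : ℝ) := by exact_mod_cast i.factorial_pos
  unfold bc
  rw [show (i:ℝ) + (v - 1) + 1 = (i:ℝ) + v by ring,
    show (i:ℝ) + v + 1 = ((i:ℝ) + v) + 1 by ring, Real.Gamma_add_one h.ne']
  field_simp


/-- The entire function `g v x = ∑ bc v i x^i`. -/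
noncomputable def g (v : ℝ) (x : ℝ) : ℝ := ∑' i : ℕ, bc v i * x ^ i

lemma bc_rec {v : ℝ} (hv : 0 ≤ v) (i : ℕ) :
    ((i:ℝ)+1) * ((i:ℝ)+v+1) * bc v (i+1) = bc v i := by
  have h1 := bc_succ hv i
  have h2 := bc_down (v := v+1) (by positivity) i
  rw [show v + 1 - 1 = v by ring] at h2
  rw [h2, ← h1]; ring

lemma summable_norm_g {v : ℝ} (hv : 0 ≤ v) (x : ℝ) :
    Summable (fun i : ℕ => ‖bc v i * x ^ i‖) := by
  have h : Summable (fun i : ℕ => bc v i * |x| ^ i) := by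
    apply summable_of_ratio_norm_eventually_le (r := 1/2) (by norm_num)
    filter_upwards [Filter.eventually_ge_atTop (⌈2*|x|⌉₊)] with i hi
    have hpos := bc_pos hv i
    have hpos' := bc_pos hv (i+1)
    have hrec := bc_rec hv i
    have hix : 2*|x| ≤ (i:ℝ) + 1 := by
      calc 2*|x| ≤ (⌈2*|x|⌉₊ : ℝ) := Nat.le_ceil _
      _ ≤ (i:ℝ) := by exact_mod_cast hi
      _ ≤ (i:ℝ) + 1 := by linarith
    have h1 : (0:ℝ) < (i:ℝ)+1 := by positivity
    have h2 : (0:ℝ) < (i:ℝ)+v+1 := by positivity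
    have hxp : (0:ℝ) ≤ |x| ^ i := by positivity
    rw [Real.norm_eq_abs, Real.norm_eq_abs,
      abs_of_nonneg (by positivity : (0:ℝ) ≤ bc v (i+1) * |x| ^ (i+1)),
      abs_of_nonneg (by positivity : (0:ℝ) ≤ bc v i * |x| ^ i)]
    have hbc' : bc v (i+1) = bc v i / (((i:ℝ)+1) * ((i:ℝ)+v+1)) := by
      field_simp; linarith [hrec]
    rw [hbc', pow_succ]
    rw [div_mul_eq_mul_div, div_le_iff₀ (by positivity)]
    have hv1 : (1:ℝ) ≤ (i:ℝ)+v+1 := by linarith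
    nlinarith [mul_le_mul_of_nonneg_left hix (mul_nonneg hpos.le hxp),
      mul_le_mul_of_nonneg_left hv1 (mul_nonneg (mul_nonneg hpos.le hxp) (abs_nonneg x))]
  apply h.congr
  intro i
  rw [norm_mul, Real.norm_eq_abs, Real.norm_eq_abs, abs_of_pos (bc_pos hv i), abs_pow]

lemma summable_g {v : ℝ} (hv : 0 ≤ v) (x : ℝ) :
    Summable (fun i : ℕ => bc v i * x ^ i) :=
  (summable_norm_g hv x).of_norm

lemma hasDerivAt_g {v : ℝ} (hv : 0 ≤ v) (x : ℝ) :
    HasDerivAt (g v) (g (v+1) x) x := by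
  set R : ℝ := |x| + 1 with hR
  have hRpos : (0:ℝ) < R := by positivity
  have hxR : x ∈ Set.Ioo (-R) R := by
    constructor
    · nlinarith [neg_abs_le x]
    · nlinarith [le_abs_self x]
  have hu : Summable (fun n : ℕ => (n:ℝ) * bc v n * R ^ (n-1)) := by
    apply (summable_nat_add_iff 1).mp
    apply Summable.congr ((summable_norm_g (by positivity : (0:ℝ) ≤ v+1) R).of_norm)
    intro k
    have hs := bc_succ hv k
    simp only [Nat.add_sub_cancel]
    push_cast
    linear_combination (R ^ k) * hs.symm
  have key : HasDerivAt (fun y : ℝ => ∑' n : ℕ, bc v n * y ^ n)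
      (∑' n : ℕ, (n:ℝ) * bc v n * x ^ (n-1)) x := by
    refine hasDerivAt_tsum_of_isPreconnected (g := fun (n : ℕ) (y : ℝ) => bc v n * y ^ n)
      (g' := fun (n : ℕ) (y : ℝ) => (n:ℝ) * bc v n * y ^ (n-1))
      hu isOpen_Ioo (convex_Ioo (-R) R).isPreconnected ?_ ?_ hxR (summable_g hv x) hxR
    · intro n y _
      simpa [mul_comm, mul_assoc, mul_left_comm] using (hasDerivAt_pow n y).const_mul (bc v n)
    · intro n y hy
      have h1 : |y| ≤ R := by
        rcases hy with ⟨ha, hb⟩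
        rw [abs_le]; constructor <;> linarith
      have hb := (bc_pos hv n).le
      rw [norm_mul, norm_mul, Real.norm_eq_abs, Real.norm_eq_abs, Real.norm_eq_abs,
        abs_of_nonneg (by positivity : (0:ℝ) ≤ (n:ℝ)), abs_of_nonneg hb]
      have h2 : |y ^ (n-1)| ≤ R ^ (n-1) := by
        rw [abs_pow]
        exact pow_le_pow_left₀ (abs_nonneg y) h1 _
      have h3 : (0:ℝ) ≤ (n:ℝ) * bc v n := by positivity
      exact mul_le_mul_of_nonneg_left h2 h3
  have heq : (∑' n : ℕ, (n:ℝ) * bc v n * x ^ (n-1)) = g (v+1) x := by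
    rw [g, Summable.tsum_eq_zero_add]
    · simp only [Nat.cast_zero, zero_mul, zero_add]
      apply tsum_congr
      intro k
      have hs := bc_succ hv k
      simp only [Nat.add_sub_cancel]
      push_cast
      linear_combination (x ^ k) * hs
    · apply (summable_nat_add_iff 1).mp
      apply Summable.congr ((summable_norm_g (by positivity : (0:ℝ) ≤ v+1) x).of_norm)
      intro k
      have hs := bc_succ hv k
      simp only [Nat.add_sub_cancel]
      push_cast
      linear_combination (x ^ k) * hs.symm
  rw [← heq]
  exact key

lemma g_pos {v : ℝ} (hv : 0 ≤ v) {x : ℝ} (hx : 0 ≤ x) : 0 < g v x := by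
  apply Summable.tsum_pos (summable_g hv x) (fun i => mul_nonneg (bc_pos hv i).le (pow_nonneg hx i)) 0
  simpa using bc_pos hv 0


open Finset in
/-- Relation `j·b_j = a_{j-1}` : `(j:ℝ) * bc (v-1) j = bc v (j-1)` for `j ≥ 1`. -/
lemma b_mul (hv : 1 ≤ v) {j : ℕ} (hj : 1 ≤ j) :
    (j:ℝ) * bc (v-1) j = bc v (j-1) := by
  have h := bc_succ (v := v-1) (by linarith) (j-1)
  rw [show v - 1 + 1 = v by ring, Nat.sub_add_cancel hj] at h
  rw [← h]
  congr 1
  have : ((j-1:ℕ):ℝ) = (j:ℝ) - 1 := by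
    rw [Nat.cast_sub hj]; norm_num
  rw [this]; ring

open Finset in
/-- `b_{j-1} = j (j+v-1) b_j` for `j ≥ 1`. -/
lemma b_pred (hv : 1 ≤ v) {j : ℕ} (hj : 1 ≤ j) :
    bc (v-1) (j-1) = (j:ℝ) * ((j:ℝ) + v - 1) * bc (v-1) j := by
  have h1 := b_mul hv hj
  have h2 := bc_down (v := v) (by linarith) (j-1)
  rw [h2, ← h1]
  have : ((j-1:ℕ):ℝ) = (j:ℝ) - 1 := by
    rw [Nat.cast_sub hj]; norm_num
  rw [this]; ring

open Finset in
/-- Telescoping identity: `(n+v)·E_n = T_n - U_{n-1}`. -/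
lemma tel_identity {v : ℝ} (hv : 1 ≤ v) (n : ℕ) :
    ((n:ℝ)+v) * (∑ i ∈ range (n+1),
        (1 + 2*(i:ℝ) - 2*((n-i:ℕ):ℝ)) * (bc v i * bc (v-1) (n-i)))
      = (∑ i ∈ range (n+1), bc (v-1) i * bc (v-1) (n-i))
        - ∑ i ∈ range n, bc v i * bc v (n-1-i) := by
  set T := ∑ i ∈ range (n+1), bc (v-1) i * bc (v-1) (n-i) with hT
  set U := ∑ i ∈ range n, bc v i * bc v (n-1-i) with hU
  -- step B : the middle sum M equals T - U
  have stepB : ∑ i ∈ range (n+1),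
      ((i:ℝ) - ((n-i:ℕ):ℝ) + v) * (bc v i * bc (v-1) (n-i)) = T - U := by
    have e1 : ∀ i ∈ range (n+1),
        ((i:ℝ) - ((n-i:ℕ):ℝ) + v) * (bc v i * bc (v-1) (n-i))
          = bc (v-1) i * bc (v-1) (n-i) - ((n-i:ℕ):ℝ) * (bc v i * bc (v-1) (n-i)) := by
      intro i _
      have h := bc_down (v := v) (by linarith) i
      rw [h]; ring
    rw [Finset.sum_congr rfl e1, Finset.sum_sub_distrib, ← hT]
    congr 1
    -- second sum equals U
    rw [Finset.sum_range_succ]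
    simp only [Nat.sub_self, Nat.cast_zero, zero_mul, add_zero]
    rw [hU]
    apply Finset.sum_congr rfl
    intro i hi
    rw [Finset.mem_range] at hi
    have hj : 1 ≤ n - i := by omega
    have h := b_mul hv hj
    have hnn : n - i - 1 = n - 1 - i := by omega
    rw [← hnn, ← h]
    ring
  -- step A : telescoping
  have stepA : ∑ i ∈ range (n+1),
      (((n:ℝ)+v) * ((1 + 2*(i:ℝ) - 2*((n-i:ℕ):ℝ)) * (bc v i * bc (v-1) (n-i)))
        - ((i:ℝ) - ((n-i:ℕ):ℝ) + v) * (bc v i * bc (v-1) (n-i))) = 0 := by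
    set H : ℕ → ℝ := fun i => 2*(i:ℝ)*((i:ℝ)+v) * (bc v i * bc (v-1) (n-i)) with hH
    have hper : ∀ i ∈ range n,
        ((n:ℝ)+v) * ((1 + 2*(i:ℝ) - 2*((n-i:ℕ):ℝ)) * (bc v i * bc (v-1) (n-i)))
          - ((i:ℝ) - ((n-i:ℕ):ℝ) + v) * (bc v i * bc (v-1) (n-i))
          = H i - H (i+1) := by
      intro i hi
      rw [Finset.mem_range] at hi
      have hin : i + 1 ≤ n := hi
      have hc1 : ((n-i:ℕ):ℝ) = (n:ℝ) - (i:ℝ) := by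
        rw [Nat.cast_sub (by omega)]
      have hrec := bc_rec (by linarith : (0:ℝ) ≤ v) i
      have hj : 1 ≤ n - i := by omega
      have hb : bc (v-1) (n-(i+1)) = ((n-i:ℕ):ℝ) * (((n-i:ℕ):ℝ) + v - 1) * bc (v-1) (n-i) := by
        have := b_pred hv hj
        rw [show n - (i+1) = n - i - 1 by omega]
        exact this
      rw [hH]
      simp only
      rw [hb, hc1]
      have hA : bc v (i+1) = bc v i / (((i:ℝ)+1) * ((i:ℝ)+v+1)) := by
        field_simp
        linarith [hrec]
      rw [hA]
      have hpos1 : ((i:ℝ)+1) ≠ 0 := by positivity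
      have hpos2 : ((i:ℝ)+v+1) ≠ 0 := by positivity
      push_cast
      field_simp
      ring
    rw [Finset.sum_range_succ, Finset.sum_congr rfl hper, Finset.sum_range_sub']
    have hH0 : H 0 = 0 := by simp [hH]
    have hlast : ((n:ℝ)+v) * ((1 + 2*(n:ℝ) - 2*((n-n:ℕ):ℝ)) * (bc v n * bc (v-1) (n-n)))
        - ((n:ℝ) - ((n-n:ℕ):ℝ) + v) * (bc v n * bc (v-1) (n-n)) = H n := by
      simp only [Nat.sub_self, Nat.cast_zero, hH]
      ring
    rw [hlast, hH0]
    ring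
  have expand : ((n:ℝ)+v) * (∑ i ∈ range (n+1),
      (1 + 2*(i:ℝ) - 2*((n-i:ℕ):ℝ)) * (bc v i * bc (v-1) (n-i)))
      = ∑ i ∈ range (n+1),
        ((n:ℝ)+v) * ((1 + 2*(i:ℝ) - 2*((n-i:ℕ):ℝ)) * (bc v i * bc (v-1) (n-i))) :=
    Finset.mul_sum _ _ _
  rw [expand, ← stepB]
  have := Finset.sum_sub_distrib (s := range (n+1))
    (f := fun i => ((n:ℝ)+v) * ((1 + 2*(i:ℝ) - 2*((n-i:ℕ):ℝ)) * (bc v i * bc (v-1) (n-i))))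
    (g := fun i => ((i:ℝ) - ((n-i:ℕ):ℝ) + v) * (bc v i * bc (v-1) (n-i)))
  rw [← sub_eq_zero]
  rw [← this]
  exact stepA

open Finset in
/-- `U_{n-1} ≤ T_n - b_0 b_n`. -/
lemma U_le_T {v : ℝ} (hv : 1 ≤ v) (n : ℕ) :
    ∑ i ∈ range n, bc v i * bc v (n-1-i)
      ≤ (∑ i ∈ range (n+1), bc (v-1) i * bc (v-1) (n-i)) - bc (v-1) 0 * bc (v-1) n := by
  have hterm : ∀ i ∈ range n, bc v i * bc v (n-1-i)
      ≤ 1/2 * (bc (v-1) (i+1) * bc (v-1) (n-1-i) + bc (v-1) i * bc (v-1) (n-i)) := by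
    intro i hi
    rw [Finset.mem_range] at hi
    set j := n - 1 - i with hjdef
    have hnj : n - i = j + 1 := by omega
    rw [hnj]
    -- express everything via X := bc (v-1) (i+1), Y := bc (v-1) (j+1)
    have hX := bc_succ (v := v-1) (by linarith) i
    have hY := bc_succ (v := v-1) (by linarith) j
    rw [show v - 1 + 1 = v by ring] at hX hY
    have hbi := bc_down (v := v) (by linarith) i
    have hbj := bc_down (v := v) (by linarith) j
    set X := bc (v-1) (i+1) with hXd
    set Y := bc (v-1) (j+1) with hYd
    have hXpos : 0 < X := bc_pos (by linarith) (i+1)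
    have hYpos : 0 < Y := bc_pos (by linarith) (j+1)
    have key : 2*((i:ℝ)+1)*((j:ℝ)+1) ≤ ((j:ℝ)+1)*((j:ℝ)+v) + ((i:ℝ)+1)*((i:ℝ)+v) := by
      nlinarith [sq_nonneg ((i:ℝ)-(j:ℝ))]
    -- bc v i = (i+1) X, bc v j = (j+1) Y, bc (v-1) i = (i+v)(i+1) X, bc (v-1) j = (j+v)(j+1) Y
    rw [← hX, ← hY, hbi, hbj, ← hX, ← hY]
    nlinarith [mul_nonneg hXpos.le hYpos.le, mul_le_mul_of_nonneg_right key
      (mul_nonneg hXpos.le hYpos.le)]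
  calc ∑ i ∈ range n, bc v i * bc v (n-1-i)
      ≤ ∑ i ∈ range n, 1/2 * (bc (v-1) (i+1) * bc (v-1) (n-1-i)
          + bc (v-1) i * bc (v-1) (n-i)) := Finset.sum_le_sum hterm
    _ = 1/2 * (∑ i ∈ range n, bc (v-1) (i+1) * bc (v-1) (n-1-i))
        + 1/2 * (∑ i ∈ range n, bc (v-1) i * bc (v-1) (n-i)) := by
        rw [← Finset.mul_sum, Finset.sum_add_distrib]; ring
    _ = (∑ i ∈ range (n+1), bc (v-1) i * bc (v-1) (n-i)) - bc (v-1) 0 * bc (v-1) n := by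
        have e1 : ∑ i ∈ range (n+1), bc (v-1) i * bc (v-1) (n-i)
            = (∑ i ∈ range n, bc (v-1) (i+1) * bc (v-1) (n-1-i)) + bc (v-1) 0 * bc (v-1) n := by
          rw [Finset.sum_range_succ']
          simp only [Nat.sub_zero]
          congr 1
          apply Finset.sum_congr rfl
          intro i _
          congr 2
          omega
        have e2 : ∑ i ∈ range (n+1), bc (v-1) i * bc (v-1) (n-i)
            = (∑ i ∈ range n, bc (v-1) i * bc (v-1) (n-i)) + bc (v-1) n * bc (v-1) 0 := by
          rw [Finset.sum_range_succ]
          simp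
        have := e1
        have := e2
        linarith [e1, e2]

open Finset in
/-- Positivity of the power-series coefficients of the derivative numerator. -/
lemma coeff_pos {v : ℝ} (hv : 1 ≤ v) (n : ℕ) :
    0 < 1/2 * (∑ i ∈ range (n+1), bc v i * bc (v-1) (n-i))
      + ∑ i ∈ range (n+1), ((i:ℝ) - ((n-i:ℕ):ℝ)) * (bc v i * bc (v-1) (n-i)) := by
  have htel := tel_identity hv n
  have hU := U_le_T hv n
  have hb0 : 0 < bc (v-1) 0 := bc_pos (by linarith) 0
  have hbn : 0 < bc (v-1) n := bc_pos (by linarith) n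
  have hpos : 0 < ((n:ℝ)+v) := by positivity
  have hsum : (∑ i ∈ range (n+1),
      (1 + 2*(i:ℝ) - 2*((n-i:ℕ):ℝ)) * (bc v i * bc (v-1) (n-i)))
      = 2 * (1/2 * (∑ i ∈ range (n+1), bc v i * bc (v-1) (n-i))
        + ∑ i ∈ range (n+1), ((i:ℝ) - ((n-i:ℕ):ℝ)) * (bc v i * bc (v-1) (n-i))) := by
    have e : ∀ i ∈ range (n+1), (1 + 2*(i:ℝ) - 2*((n-i:ℕ):ℝ)) * (bc v i * bc (v-1) (n-i))
        = bc v i * bc (v-1) (n-i) + 2 * (((i:ℝ) - ((n-i:ℕ):ℝ)) * (bc v i * bc (v-1) (n-i))) := by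
      intro i _; ring
    rw [Finset.sum_congr rfl e, Finset.sum_add_distrib, ← Finset.mul_sum]
    ring
  rw [hsum] at htel
  nlinarith [mul_pos hb0 hbn]


noncomputable def tn (v : ℝ) (n : ℕ) : ℝ :=
  ∑ i ∈ Finset.range (n+1), bc v i * bc (v-1) (n-i)

noncomputable def sn (v : ℝ) (n : ℕ) : ℝ :=
  ∑ i ∈ Finset.range (n+1), ((i:ℝ) - ((n-i:ℕ):ℝ)) * (bc v i * bc (v-1) (n-i))

open Finset in
lemma sn_succ {v : ℝ} (hv : 1 ≤ v) (n : ℕ) :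
    sn v (n+1) = ∑ i ∈ range (n+1),
      (bc (v+1) i * bc (v-1) (n-i) - bc v i * bc v (n-i)) := by
  rw [sn]
  have split : ∀ i ∈ range (n+2), ((i:ℝ) - ((n+1-i:ℕ):ℝ)) * (bc v i * bc (v-1) (n+1-i))
      = (i:ℝ) * (bc v i * bc (v-1) (n+1-i))
        - ((n+1-i:ℕ):ℝ) * (bc v i * bc (v-1) (n+1-i)) := by
    intro i _; ring
  rw [Finset.sum_congr rfl split, Finset.sum_sub_distrib]
  have h1 : ∑ i ∈ range (n+2), (i:ℝ) * (bc v i * bc (v-1) (n+1-i))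
      = ∑ i ∈ range (n+1), bc (v+1) i * bc (v-1) (n-i) := by
    rw [Finset.sum_range_succ']
    simp only [Nat.cast_zero, zero_mul, add_zero]
    apply Finset.sum_congr rfl
    intro i _
    have hs := bc_succ (v := v) (by linarith) i
    push_cast
    linear_combination (bc (v-1) (n-i)) * hs
  have h2 : ∑ i ∈ range (n+2), ((n+1-i:ℕ):ℝ) * (bc v i * bc (v-1) (n+1-i))
      = ∑ i ∈ range (n+1), bc v i * bc v (n-i) := by
    rw [Finset.sum_range_succ]
    simp only [Nat.sub_self, Nat.cast_zero, zero_mul, add_zero]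
    apply Finset.sum_congr rfl
    intro i hi
    rw [Finset.mem_range] at hi
    have hj : 1 ≤ n + 1 - i := by omega
    have hb := b_mul hv hj
    rw [show n + 1 - i - 1 = n - i by omega] at hb
    rw [← hb]
    ring
  rw [h1, h2, ← Finset.sum_sub_distrib]

open Finset in
lemma tsum_prod_eq {v w : ℝ} (hv : 0 ≤ v) (hw : 0 ≤ w) (x : ℝ) :
    g v x * g w x = ∑' n : ℕ, (∑ i ∈ range (n+1), bc v i * bc w (n-i)) * x ^ n := by
  rw [g, g, tsum_mul_tsum_eq_tsum_sum_range_of_summable_norm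
    (summable_norm_g hv x) (summable_norm_g hw x)]
  apply tsum_congr
  intro n
  rw [Finset.sum_mul]
  apply Finset.sum_congr rfl
  intro i hi
  rw [Finset.mem_range] at hi
  have : x ^ i * x ^ (n-i) = x ^ n := by
    rw [← pow_add]
    congr 1
    omega
  calc bc v i * x ^ i * (bc w (n-i) * x ^ (n-i))
      = bc v i * bc w (n-i) * (x ^ i * x ^ (n-i)) := by ring
    _ = bc v i * bc w (n-i) * x ^ n := by rw [this]

open Finset in
lemma summable_prod_coeff {v w : ℝ} (hv : 0 ≤ v) (hw : 0 ≤ w) (x : ℝ) :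
    Summable (fun n : ℕ => (∑ i ∈ range (n+1), bc v i * bc w (n-i)) * x ^ n) := by
  have h := summable_sum_mul_range_of_summable_norm'
    (summable_norm_g hv x) (summable_g hv x) (summable_norm_g hw x) (summable_g hw x)
  apply h.congr
  intro n
  rw [Finset.sum_mul]
  apply Finset.sum_congr rfl
  intro i hi
  rw [Finset.mem_range] at hi
  have hxx : x ^ i * x ^ (n-i) = x ^ n := by
    rw [← pow_add]; congr 1; omega
  calc bc v i * x ^ i * (bc w (n-i) * x ^ (n-i))
      = bc v i * bc w (n-i) * (x ^ i * x ^ (n-i)) := by ring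
    _ = bc v i * bc w (n-i) * x ^ n := by rw [hxx]

open Finset in
lemma summable_sn {v : ℝ} (hv : 1 ≤ v) (x : ℝ) :
    Summable (fun n : ℕ => sn v n * x ^ n) := by
  have hv0 : (0:ℝ) ≤ v := by linarith
  have hv1 : (0:ℝ) ≤ v - 1 := by linarith
  have hv2 : (0:ℝ) ≤ v + 1 := by linarith
  have S2 : Summable (fun n : ℕ =>
      (∑ i ∈ range (n+1), bc (v+1) i * bc (v-1) (n-i)) * x ^ n) :=
    summable_prod_coeff hv2 hv1 x
  have S3 : Summable (fun n : ℕ =>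
      (∑ i ∈ range (n+1), bc v i * bc v (n-i)) * x ^ n) :=
    summable_prod_coeff hv0 hv0 x
  have S23 : Summable (fun n : ℕ =>
      (∑ i ∈ range (n+1), (bc (v+1) i * bc (v-1) (n-i) - bc v i * bc v (n-i))) * x ^ n) := by
    apply (S2.sub S3).congr
    intro n
    rw [Finset.sum_sub_distrib]
    ring
  apply (summable_nat_add_iff 1).mp
  apply (S23.mul_right x).congr
  intro n
  rw [sn_succ hv n, pow_succ]
  ring

lemma summable_combined {v : ℝ} (hv : 1 ≤ v) (x : ℝ) :
    Summable (fun n : ℕ => (1/2 * tn v n + sn v n) * x ^ n) := by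
  have S1 : Summable (fun n : ℕ => tn v n * x ^ n) :=
    summable_prod_coeff (by linarith) (by linarith) x
  apply ((S1.mul_left (1/2)).add (summable_sn hv x)).congr
  intro n
  ring

open Finset in
lemma num_eq_tsum {v : ℝ} (hv : 1 ≤ v) (x : ℝ) :
    1/2 * (g v x * g (v-1) x) + x * (g (v+1) x * g (v-1) x - g v x * g v x)
      = ∑' n : ℕ, (1/2 * tn v n + sn v n) * x ^ n := by
  have hv0 : (0:ℝ) ≤ v := by linarith
  have hv1 : (0:ℝ) ≤ v - 1 := by linarith
  have hv2 : (0:ℝ) ≤ v + 1 := by linarith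
  have hPQ := tsum_prod_eq hv0 hv1 x
  have hP'Q := tsum_prod_eq hv2 hv1 x
  have hPP := tsum_prod_eq hv0 hv0 x
  have S1 : Summable (fun n : ℕ => tn v n * x ^ n) := summable_prod_coeff hv0 hv1 x
  have S2 : Summable (fun n : ℕ =>
      (∑ i ∈ range (n+1), bc (v+1) i * bc (v-1) (n-i)) * x ^ n) :=
    summable_prod_coeff hv2 hv1 x
  have S3 : Summable (fun n : ℕ =>
      (∑ i ∈ range (n+1), bc v i * bc v (n-i)) * x ^ n) :=
    summable_prod_coeff hv0 hv0 x
  have S23 : Summable (fun n : ℕ =>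
      (∑ i ∈ range (n+1), (bc (v+1) i * bc (v-1) (n-i) - bc v i * bc v (n-i))) * x ^ n) := by
    apply (S2.sub S3).congr
    intro n
    rw [Finset.sum_sub_distrib]
    ring
  have Sshift : Summable (fun n : ℕ => sn v (n+1) * x ^ (n+1)) := by
    apply (S23.mul_right x).congr
    intro n
    rw [sn_succ hv n, pow_succ]
    ring
  have Ssn : Summable (fun n : ℕ => sn v n * x ^ n) := summable_sn hv x
  have hsn0 : sn v 0 = 0 := by simp [sn]
  calc 1/2 * (g v x * g (v-1) x) + x * (g (v+1) x * g (v-1) x - g v x * g v x)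
      = 1/2 * (∑' n : ℕ, tn v n * x ^ n)
        + x * ((∑' n : ℕ, (∑ i ∈ range (n+1), bc (v+1) i * bc (v-1) (n-i)) * x ^ n)
          - ∑' n : ℕ, (∑ i ∈ range (n+1), bc v i * bc v (n-i)) * x ^ n) := by
        rw [hPQ, hP'Q, hPP]; rfl
    _ = 1/2 * (∑' n : ℕ, tn v n * x ^ n)
        + x * ∑' n : ℕ,
          (∑ i ∈ range (n+1), (bc (v+1) i * bc (v-1) (n-i) - bc v i * bc v (n-i))) * x ^ n := by
        rw [← Summable.tsum_sub S2 S3]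
        congr 1
        congr 1
        apply tsum_congr
        intro n
        rw [Finset.sum_sub_distrib]
        ring
    _ = 1/2 * (∑' n : ℕ, tn v n * x ^ n) + ∑' n : ℕ, sn v (n+1) * x ^ (n+1) := by
        congr 1
        rw [← tsum_mul_left]
        apply tsum_congr
        intro n
        rw [sn_succ hv n, pow_succ]
        ring
    _ = 1/2 * (∑' n : ℕ, tn v n * x ^ n) + ∑' n : ℕ, sn v n * x ^ n := by
        rw [Summable.tsum_eq_zero_add Ssn, hsn0]
        simp
    _ = ∑' n : ℕ, (1/2 * tn v n + sn v n) * x ^ n := by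
        rw [show (1/2 * (∑' n : ℕ, tn v n * x ^ n) : ℝ) = ∑' n : ℕ, 1/2 * (tn v n * x ^ n) from
          (tsum_mul_left).symm, ← Summable.tsum_add (S1.mul_left (1/2)) Ssn]
        apply tsum_congr
        intro n
        ring

lemma num_pos {v : ℝ} (hv : 1 ≤ v) {x : ℝ} (hx : 0 < x) :
    0 < 1/2 * (g v x * g (v-1) x) + x * (g (v+1) x * g (v-1) x - g v x * g v x) := by
  rw [num_eq_tsum hv x]
  have hsum : Summable (fun n : ℕ => (1/2 * tn v n + sn v n) * x ^ n) :=
    summable_combined hv x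
  apply Summable.tsum_pos hsum _ 0
  · have := coeff_pos hv 0
    simpa [tn, sn] using this
  · intro n
    have := coeff_pos hv n
    have hxn : 0 < x ^ n := pow_pos hx n
    positivity


lemma besselI_eq (v : ℝ) {κ : ℝ} (hκ : 0 < κ) :
    besselI v κ = (κ/2) ^ v * g v (κ^2/4) := by
  have h2 : (0:ℝ) < κ/2 := by linarith
  rw [besselI, g, ← tsum_mul_left]
  apply tsum_congr
  intro q
  have e1 : (κ/2) ^ ((2 * (q:ℕ) : ℝ) + v) = (κ/2) ^ ((2*q : ℕ) : ℝ) * (κ/2) ^ v := by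
    rw [← Real.rpow_add h2]
    norm_num
  have e2 : (κ/2) ^ (((2*q : ℕ) : ℝ)) = (κ^2/4) ^ q := by
    rw [Real.rpow_natCast, pow_mul]
    congr 1
    ring
  rw [e1, e2, bc]
  ring

lemma Ap_eq (p : ℕ) {κ : ℝ} (hκ : 0 < κ) :
    Ap p κ = (κ/2) * (g ((p:ℝ)/2) (κ^2/4) / g ((p:ℝ)/2 - 1) (κ^2/4)) := by
  have h2 : (0:ℝ) < κ/2 := by linarith
  rw [Ap, besselI_eq ((p:ℝ)/2) hκ, besselI_eq ((p:ℝ)/2 - 1) hκ]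
  rw [← div_mul_div_comm, ← Real.rpow_sub h2, show (p:ℝ)/2 - ((p:ℝ)/2 - 1) = 1 by ring,
    Real.rpow_one]

end BsAux

theorem stmt_7 (p : ℕ) (hp : 2 ≤ p) :
    (∀ κ : ℝ, 0 < κ → 0 < deriv (Ap p) κ) ∧ StrictMonoOn (Ap p) (Set.Ioi 0) := by
  have hv : 1 ≤ (p:ℝ)/2 := by
    have : (2:ℝ) ≤ p := by exact_mod_cast hp
    linarith
  set v : ℝ := (p:ℝ)/2 with hvdef
  have key : ∀ κ : ℝ, 0 < κ → ∃ D : ℝ, 0 < D ∧ HasDerivAt (Ap p) D κ := by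
    intro κ hκ
    set x : ℝ := κ^2/4 with hxdef
    have hx : 0 < x := by rw [hxdef]; positivity
    have hQ : 0 < BsAux.g (v-1) x := BsAux.g_pos (by linarith) hx.le
    have hP : 0 < BsAux.g v x := BsAux.g_pos (by linarith) hx.le
    have hu : HasDerivAt (fun y : ℝ => y^2/4) (κ/2) κ := by
      have h := (hasDerivAt_pow 2 κ).div_const 4
      refine h.congr_deriv ?_
      norm_num
      ring
    have hPκ : HasDerivAt (fun y : ℝ => BsAux.g v (y^2/4)) (BsAux.g (v+1) x * (κ/2)) κ := by
      have h := (BsAux.hasDerivAt_g (v := v) (by linarith) x).comp κ hu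
      exact h
    have hQκ : HasDerivAt (fun y : ℝ => BsAux.g (v-1) (y^2/4)) (BsAux.g v x * (κ/2)) κ := by
      have h := (BsAux.hasDerivAt_g (v := v-1) (by linarith) x).comp κ hu
      rw [show v - 1 + 1 = v by ring] at h
      exact h
    have hhalf : HasDerivAt (fun y : ℝ => y/2) (1/2 : ℝ) κ := by
      simpa using (hasDerivAt_id κ).div_const 2
    have hdiv := hPκ.div hQκ hQ.ne'
    have hmul := hhalf.mul hdiv
    set D := 1/2 * (BsAux.g v x / BsAux.g (v-1) x)
      + κ/2 * ((BsAux.g (v+1) x * (κ/2) * BsAux.g (v-1) x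
          - BsAux.g v x * (BsAux.g v x * (κ/2))) / BsAux.g (v-1) x ^ 2) with hDdef
    have hF : HasDerivAt
        (fun y : ℝ => (y/2) * (BsAux.g v (y^2/4) / BsAux.g (v-1) (y^2/4))) D κ := hmul
    have hDpos : 0 < D := by
      have hnum := BsAux.num_pos hv hx
      have hxeq : κ/2 * (κ/2) = x := by rw [hxdef]; ring
      have hDval : D = (1/2 * (BsAux.g v x * BsAux.g (v-1) x)
          + x * (BsAux.g (v+1) x * BsAux.g (v-1) x - BsAux.g v x * BsAux.g v x))
            / BsAux.g (v-1) x ^ 2 := by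
        rw [hDdef, hxdef]
        have hg := (BsAux.g_pos (by linarith : (0:ℝ) ≤ v - 1) hx.le).ne'
        rw [hxdef] at hg
        field_simp
        ring
      rw [hDval]
      positivity
    have hAeq : Ap p =ᶠ[nhds κ]
        (fun y : ℝ => (y/2) * (BsAux.g v (y^2/4) / BsAux.g (v-1) (y^2/4))) := by
      filter_upwards [Ioi_mem_nhds hκ] with y hy
      exact BsAux.Ap_eq p hy
    exact ⟨D, hDpos, hF.congr_of_eventuallyEq hAeq⟩
  have part1 : ∀ κ : ℝ, 0 < κ → 0 < deriv (Ap p) κ := by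
    intro κ hκ
    obtain ⟨D, hD, hd⟩ := key κ hκ
    rw [hd.deriv]
    exact hD
  refine ⟨part1, ?_⟩
  apply strictMonoOn_of_deriv_pos (convex_Ioi 0)
  · intro κ hκ
    obtain ⟨D, hD, hd⟩ := key κ hκ
    exact hd.differentiableAt.continuousAt.continuousWithinAt
  · intro κ hκ
    rw [interior_Ioi] at hκ
    exact part1 κ hκ
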